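/- arXiv:1403.2073 — 8 statements merged into one kernel-verified Lean document; each statement's English description precedes it below -/
import Mathlib

section
/- Let L ≥ 1 and let D_1, D_0 be real diagonal L×L matrices with diagonal entries d1_0,…,d1_{L−1} and d0_0,…,d0_{L−1} respectively, where every d0_l > 0. Let l* be an index at which the ratio d1_l/d0_l attains its maximum. Then for every nonzero g ∈ ℝ^L, (gᵀ D_1 g)/(gᵀ D_0 g) ≤ d1_{l*}/d0_{l*}. Moreover, if the ratios d1_l/d0_l are pairwise distinct, equality holds if and only if g is a nonzero scalar multiple of the standard basis vector e_{l*}. -/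
open Matrix

lemma quad_eq (L : ℕ) (d g : Fin L → ℝ) :
    g ⬝ᵥ (Matrix.diagonal d *ᵥ g) = ∑ i, d i * g i ^ 2 := by
  simp only [dotProduct, mulVec_diagonal]
  exact Finset.sum_congr rfl (fun i _ => by ring)

/-- For diagonal matrices `D₁ = diagonal d1`, `D₀ = diagonal d0` with `d0 l > 0`,
and `lstar` maximizing the ratio `d1 l / d0 l`, every nonzero `g` satisfies
`(gᵀ D₁ g)/(gᵀ D₀ g) ≤ d1 lstar / d0 lstar`; if the ratios are pairwise distinct,
equality holds iff `g` is a nonzero scalar multiple of `e_{lstar}`. -/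
theorem stmt_1 (L : ℕ) (hL : 1 ≤ L) (d1 d0 : Fin L → ℝ) (hd0 : ∀ l, 0 < d0 l)
    (lstar : Fin L) (hmax : ∀ l, d1 l / d0 l ≤ d1 lstar / d0 lstar) :
    (∀ g : Fin L → ℝ, g ≠ 0 →
      (g ⬝ᵥ (Matrix.diagonal d1 *ᵥ g)) / (g ⬝ᵥ (Matrix.diagonal d0 *ᵥ g)) ≤
        d1 lstar / d0 lstar) ∧
    ((∀ i j : Fin L, i ≠ j → d1 i / d0 i ≠ d1 j / d0 j) →
      ∀ g : Fin L → ℝ, g ≠ 0 →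
        ((g ⬝ᵥ (Matrix.diagonal d1 *ᵥ g)) / (g ⬝ᵥ (Matrix.diagonal d0 *ᵥ g)) =
            d1 lstar / d0 lstar ↔
          ∃ c : ℝ, c ≠ 0 ∧ g = c • (Pi.single lstar 1 : Fin L → ℝ))) := by
  set r := d1 lstar / d0 lstar with hr
  -- termwise bound
  have hterm : ∀ (g : Fin L → ℝ) (i : Fin L), d1 i * g i ^ 2 ≤ r * (d0 i * g i ^ 2) := by
    intro g i
    have h1 : d1 i ≤ r * d0 i := (div_le_iff₀ (hd0 i)).mp (hmax i)
    have h2 : (0:ℝ) ≤ g i ^ 2 := sq_nonneg _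
    calc d1 i * g i ^ 2 ≤ r * d0 i * g i ^ 2 := mul_le_mul_of_nonneg_right h1 h2
      _ = r * (d0 i * g i ^ 2) := by ring
  have hSpos : ∀ g : Fin L → ℝ, g ≠ 0 → 0 < ∑ i, d0 i * g i ^ 2 := by
    intro g hg
    obtain ⟨j, hj⟩ := Function.ne_iff.mp hg
    apply Finset.sum_pos' (fun i _ => mul_nonneg (hd0 i).le (sq_nonneg _))
    exact ⟨j, Finset.mem_univ j, mul_pos (hd0 j) (by rw [← sq_abs]; exact pow_pos (abs_pos.mpr hj) 2)⟩
  have hNle : ∀ g : Fin L → ℝ, (∑ i, d1 i * g i ^ 2) ≤ r * ∑ i, d0 i * g i ^ 2 := by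
    intro g
    rw [Finset.mul_sum]
    exact Finset.sum_le_sum fun i _ => hterm g i
  have hineq : ∀ g : Fin L → ℝ, g ≠ 0 →
      (g ⬝ᵥ (Matrix.diagonal d1 *ᵥ g)) / (g ⬝ᵥ (Matrix.diagonal d0 *ᵥ g)) ≤ r := by
    intro g hg
    rw [quad_eq, quad_eq]
    exact (div_le_iff₀ (hSpos g hg)).mpr (hNle g)
  refine ⟨hineq, ?_⟩
  intro hdist g hg
  rw [quad_eq, quad_eq]
  constructor
  · intro heq
    have hS := hSpos g hg
    have hNeq : (∑ i, d1 i * g i ^ 2) = r * ∑ i, d0 i * g i ^ 2 := by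
      field_simp at heq
      linarith [heq]
    have hzero : ∑ i, (r * (d0 i * g i ^ 2) - d1 i * g i ^ 2) = 0 := by
      rw [Finset.sum_sub_distrib, ← Finset.mul_sum, hNeq, sub_self]
    have hall : ∀ i ∈ Finset.univ, r * (d0 i * g i ^ 2) - d1 i * g i ^ 2 = 0 :=
      (Finset.sum_eq_zero_iff_of_nonneg (fun i _ => sub_nonneg.mpr (hterm g i))).mp hzero
    have hgz : ∀ i : Fin L, i ≠ lstar → g i = 0 := by
      intro i hi
      by_contra hgi
      have h := hall i (Finset.mem_univ i)
      have hsq : g i ^ 2 ≠ 0 := pow_ne_zero _ hgi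
      have : d1 i = r * d0 i := by
        have : (r * d0 i - d1 i) * g i ^ 2 = 0 := by linarith [h]
        have := (mul_eq_zero.mp this).resolve_right hsq
        linarith
      exact hdist i lstar hi (by rw [this, hr, mul_div_assoc, div_self (hd0 i).ne', mul_one])
    refine ⟨g lstar, ?_, ?_⟩
    · intro h0
      apply hg
      funext i
      by_cases hi : i = lstar
      · rw [hi, h0]; rfl
      · exact hgz i hi
    · funext i
      by_cases hi : i = lstar
      · subst hi; simp
      · simp [hgz i hi, Pi.single_eq_of_ne hi]
  · rintro ⟨c, hc, rfl⟩
    have h1 : ∀ (d : Fin L → ℝ),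
        (∑ i, d i * (c • (Pi.single lstar 1 : Fin L → ℝ)) i ^ 2) = d lstar * c ^ 2 := by
      intro d
      rw [Finset.sum_eq_single lstar]
      · simp
      · intro i _ hi; simp [Pi.single_eq_of_ne hi]
      · intro h; exact absurd (Finset.mem_univ lstar) h
    rw [h1, h1, hr]
    rw [mul_div_mul_right _ _ (pow_ne_zero 2 hc)]
end

section
/- Let L ≥ 1 and let D_1, D_0 be real diagonal L×L matrices with diagonal entries d1_0,…,d1_{L−1} and d0_0,…,d0_{L−1} respectively, where every d0_l > 0. Let l_min be an index at which the ratio d1_l/d0_l attains its minimum. Then for every nonzero g ∈ ℝ^L, (gᵀ D_1 g)/(gᵀ D_0 g) ≥ d1_{l_min}/d0_{l_min}. Moreover, if the ratios d1_l/d0_l are pairwise distinct, equality holds if and only if g is a nonzero scalar multiple of the standard basis vector e_{l_min}. -/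
open Matrix

/-- For diagonal matrices `D₁ = diagonal d1`, `D₀ = diagonal d0` with `d0 l > 0`,
and `lmin` minimizing the ratio `d1 l / d0 l`, every nonzero `g` satisfies
`(gᵀ D₁ g)/(gᵀ D₀ g) ≥ d1 lmin / d0 lmin`; if the ratios are pairwise distinct,
equality holds iff `g` is a nonzero scalar multiple of `e_{lmin}`. -/
theorem stmt_2 (L : ℕ) (hL : 1 ≤ L) (d1 d0 : Fin L → ℝ) (hd0 : ∀ l, 0 < d0 l)
    (lmin : Fin L) (hmin : ∀ l, d1 lmin / d0 lmin ≤ d1 l / d0 l) :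
    (∀ g : Fin L → ℝ, g ≠ 0 →
      d1 lmin / d0 lmin ≤
        (g ⬝ᵥ (Matrix.diagonal d1 *ᵥ g)) / (g ⬝ᵥ (Matrix.diagonal d0 *ᵥ g))) ∧
    ((∀ i j : Fin L, i ≠ j → d1 i / d0 i ≠ d1 j / d0 j) →
      ∀ g : Fin L → ℝ, g ≠ 0 →
        ((g ⬝ᵥ (Matrix.diagonal d1 *ᵥ g)) / (g ⬝ᵥ (Matrix.diagonal d0 *ᵥ g)) =
            d1 lmin / d0 lmin ↔
          ∃ c : ℝ, c ≠ 0 ∧ g = c • (Pi.single lmin 1 : Fin L → ℝ))) := by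
  have hq : ∀ (d : Fin L → ℝ) (g : Fin L → ℝ),
      g ⬝ᵥ (Matrix.diagonal d *ᵥ g) = ∑ i, d i * g i ^ 2 := by
    intro d g
    simp only [dotProduct, Matrix.mulVec_diagonal]
    exact Finset.sum_congr rfl (fun i _ => by ring)
  set r := d1 lmin / d0 lmin with hr
  have hge : ∀ i, r * d0 i ≤ d1 i := fun i => (le_div_iff₀ (hd0 i)).mp (hmin i)
  have hden : ∀ g : Fin L → ℝ, g ≠ 0 → 0 < ∑ i, d0 i * g i ^ 2 := by
    intro g hg
    obtain ⟨j, hj⟩ := Function.ne_iff.mp hg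
    refine Finset.sum_pos' (fun i _ => mul_nonneg (hd0 i).le (sq_nonneg _)) ⟨j, Finset.mem_univ j, ?_⟩
    have h2 : (0:ℝ) < g j ^ 2 := by rw [← sq_abs]; exact pow_pos (abs_pos.mpr hj) 2
    exact mul_pos (hd0 j) h2
  have hnum : ∀ g : Fin L → ℝ, r * ∑ i, d0 i * g i ^ 2 ≤ ∑ i, d1 i * g i ^ 2 := by
    intro g
    rw [Finset.mul_sum]
    refine Finset.sum_le_sum (fun i _ => ?_)
    calc r * (d0 i * g i ^ 2) = (r * d0 i) * g i ^ 2 := by ring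
    _ ≤ d1 i * g i ^ 2 := mul_le_mul_of_nonneg_right (hge i) (sq_nonneg _)
  constructor
  · intro g hg
    rw [hq, hq, le_div_iff₀ (hden g hg)]
    exact hnum g
  · intro hdist g hg
    rw [hq, hq]
    have hD := hden g hg
    constructor
    · intro heq
      have hNr : ∑ i, d1 i * g i ^ 2 = r * ∑ i, d0 i * g i ^ 2 :=
        (div_eq_iff hD.ne').mp heq
      have hz : ∑ i, (d1 i - r * d0 i) * g i ^ 2 = 0 := by
        have he : ∑ i, (d1 i - r * d0 i) * g i ^ 2 =
            (∑ i, d1 i * g i ^ 2) - r * ∑ i, d0 i * g i ^ 2 := by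
          rw [Finset.mul_sum, ← Finset.sum_sub_distrib]
          exact Finset.sum_congr rfl (fun i _ => by ring)
        rw [he, hNr, sub_self]
      have hterm := (Finset.sum_eq_zero_iff_of_nonneg
        (fun i _ => mul_nonneg (sub_nonneg.mpr (hge i)) (sq_nonneg (g i)))).mp hz
      have hzero : ∀ i, i ≠ lmin → g i = 0 := by
        intro i hi
        have hlt : r * d0 i < d1 i :=
          (lt_div_iff₀ (hd0 i)).mp (lt_of_le_of_ne (hmin i) (Ne.symm (hdist i lmin hi)))
        have := hterm i (Finset.mem_univ i)
        have hne : d1 i - r * d0 i ≠ 0 := by linarith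
        have : g i ^ 2 = 0 := by
          rcases mul_eq_zero.mp this with h | h
          · exact absurd h hne
          · exact h
        exact pow_eq_zero_iff two_ne_zero |>.mp this
      have hgl : g lmin ≠ 0 := by
        intro h
        apply hg
        funext i
        by_cases hi : i = lmin
        · rw [hi]; exact h
        · exact hzero i hi
      refine ⟨g lmin, hgl, funext fun i => ?_⟩
      by_cases hi : i = lmin
      · subst hi; simp
      · simp [Pi.single_apply, hi, hzero i hi]
    · rintro ⟨c, hc, rfl⟩
      have hc2 : (c:ℝ) ^ 2 ≠ 0 := pow_ne_zero 2 hc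
      have hsum : ∀ d : Fin L → ℝ,
          ∑ i, d i * ((c • (Pi.single lmin 1 : Fin L → ℝ)) i) ^ 2 = d lmin * c ^ 2 := by
        intro d
        rw [Finset.sum_eq_single lmin]
        · simp
        · intro b _ hb; simp [Pi.single_apply, hb]
        · simp
      rw [hsum, hsum, mul_div_mul_right _ _ hc2]
end

section
/- Let (Ω, μ) be a probability space. For integers n, let s_l[n] : Ω → ℝ (l = 0,…,L−1) be source signals and v_i[n] : Ω → ℝ (i = 0,…,M−1) be noise signals, all with square-integrable pairwise products, satisfying: E[s_k[n] s_l[m]] = 0 for k ≠ l; E[s_l[n] s_l[m]] = ρ_l[n−m]; E[v_i[n] v_j[m]] = σ_v² if i = j and n = m, and 0 otherwise; and E[s_l[n] v_i[m]] = 0 for all indices and times. Let A be a real M×L matrix, x_i[n] = Σ_l A_{il} s_l[n] + v_i[n], w ∈ ℝ^M, y[n] = Σ_i w_i x_i[n], b_0 = 1, b_1,…,b_P ∈ ℝ, q_c = Σ_{p=0}^P b_p², and e[n] = y[n] − Σ_{p=1}^P b_p y[n−p]. Then q_c E[y[n]²] − E[e[n]²] = Σ_{l=0}^{L−1} g_l²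 r̂_l, where g = Aᵀ w and r̂_l = Σ_{p,q=0, p≠q}^{P} s_{pq} b_p b_q ρ_l[q−p], with s_{pq} = 1 if p = 0 or q = 0 and s_{pq} = −1 otherwise. In particular the left-hand side does not depend on the noise variance σ_v². -/
open Matrix MeasureTheory Finset

/-- Noise-free numerator of the dual-linear-predictor cost: under the noisy mixing
model `x[n] = A s[n] + v[n]` with spatially uncorrelated wide-sense-stationary
sources (autocorrelations `ρ l`) and spatially and temporally white noise of
variance `σv²` uncorrelated with the sources, with `y[n] = wᵀ x[n]` and linear
prediction error `e[n] = y[n] − ∑_{p=1}^P b p y[n−p]` (`b 0 = 1`), one has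
`q_c E[y[n]²] − E[e[n]²] = ∑_l g_l² r̂_l` with `g = Aᵀ w` and
`r̂_l = ∑_{p≠q} s_{pq} b_p b_q ρ_l[q−p]`; in particular this is independent of `σv²`. -/
theorem stmt_7 (Ω : Type*) [MeasureSpace Ω] [IsProbabilityMeasure (volume : Measure Ω)]
    (L M P : ℕ)
    (s : Fin L → ℤ → Ω → ℝ) (v : Fin M → ℤ → Ω → ℝ)
    (ρ : Fin L → ℤ → ℝ) (σv : ℝ)
    (hss_int : ∀ (k l : Fin L) (n m : ℤ), Integrable fun ω => s k n ω * s l m ω)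
    (hsv_int : ∀ (l : Fin L) (i : Fin M) (n m : ℤ), Integrable fun ω => s l n ω * v i m ω)
    (hvv_int : ∀ (i j : Fin M) (n m : ℤ), Integrable fun ω => v i n ω * v j m ω)
    (hss : ∀ (k l : Fin L) (n m : ℤ), k ≠ l → ∫ ω, s k n ω * s l m ω = 0)
    (hauto : ∀ (l : Fin L) (n m : ℤ), ∫ ω, s l n ω * s l m ω = ρ l (n - m))
    (hvv : ∀ (i j : Fin M) (n m : ℤ),
      ∫ ω, v i n ω * v j m ω = if i = j ∧ n = m then σv ^ 2 else 0)
    (hsv : ∀ (l : Fin L) (i : Fin M) (n m : ℤ), ∫ ω, s l n ω * v i m ω = 0)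
    (A : Matrix (Fin M) (Fin L) ℝ) (w : Fin M → ℝ)
    (x : Fin M → ℤ → Ω → ℝ)
    (hx : ∀ i n ω, x i n ω = (∑ l, A i l * s l n ω) + v i n ω)
    (y : ℤ → Ω → ℝ) (hy : ∀ n ω, y n ω = ∑ i, w i * x i n ω)
    (b : ℕ → ℝ) (hb0 : b 0 = 1)
    (e : ℤ → Ω → ℝ)
    (he : ∀ n ω, e n ω = y n ω - ∑ p ∈ Finset.Icc 1 P, b p * y (n - (p : ℤ)) ω) :
    ∀ n : ℤ,
      (∑ p ∈ Finset.range (P + 1), (b p) ^ 2) * (∫ ω, (y n ω) ^ 2) - ∫ ω, (e n ω) ^ 2 =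
        ∑ l, ((Aᵀ *ᵥ w) l) ^ 2 *
          (∑ p ∈ Finset.range (P + 1), ∑ q ∈ Finset.range (P + 1),
            if p ≠ q then
              (if p = 0 ∨ q = 0 then (1 : ℝ) else -1) * b p * b q * ρ l ((q : ℤ) - (p : ℤ))
            else 0) := by
  intro n
  classical
  set g : Fin L → ℝ := fun l => ∑ i, A i l * w i with hg_def
  have hg : ∀ l, (Aᵀ *ᵥ w) l = g l := by
    intro l
    simp [Matrix.mulVec, dotProduct, Matrix.transpose_apply, hg_def]
  set u : (Fin L ⊕ Fin M) → ℤ → Ω → ℝ := Sum.elim s v with hu_def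
  set c : (Fin L ⊕ Fin M) → ℝ := Sum.elim g w with hc_def
  have hyu : ∀ (n : ℤ) (ω : Ω), y n ω = ∑ a, c a * u a n ω := by
    intro n ω
    rw [Fintype.sum_sum_type]
    simp only [hu_def, hc_def, Sum.elim_inl, Sum.elim_inr]
    rw [hy]
    simp only [hx, mul_add, Finset.sum_add_distrib]
    congr 1
    simp only [Finset.mul_sum]
    rw [Finset.sum_comm]
    refine Finset.sum_congr rfl fun l _ => ?_
    rw [hg_def, Finset.sum_mul]
    exact Finset.sum_congr rfl fun i _ => by ring
  have hu_int : ∀ (a b' : Fin L ⊕ Fin M) (n m : ℤ),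
      Integrable (fun ω => u a n ω * u b' m ω) := by
    rintro (l | i) (k | j) n m
    · exact hss_int l k n m
    · exact hsv_int l j n m
    · simpa [hu_def, mul_comm] using hsv_int k i m n
    · exact hvv_int i j n m
  have hprod : ∀ (n m : ℤ), (fun ω => y n ω * y m ω) =
      fun ω => ∑ a, ∑ b', (c a * c b') * (u a n ω * u b' m ω) := by
    intro n m; funext ω
    rw [hyu, hyu, Finset.sum_mul_sum]
    exact Finset.sum_congr rfl fun a _ => Finset.sum_congr rfl fun b' _ => by ring
  have hyy_int : ∀ n m : ℤ, Integrable (fun ω => y n ω * y m ω) := by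
    intro n m
    rw [hprod]
    exact integrable_finset_sum _ fun a _ =>
      integrable_finset_sum _ fun b' _ => (hu_int a b' n m).const_mul _
  have hss' : ∀ (k l : Fin L) (n m : ℤ),
      ∫ ω, s k n ω * s l m ω = if k = l then ρ l (n - m) else 0 := by
    intro k l n m
    by_cases h : k = l
    · subst h; simp [hauto]
    · simp [h, hss k l n m h]
  have hvs : ∀ (i : Fin M) (l : Fin L) (n m : ℤ), ∫ ω, v i n ω * s l m ω = 0 := by
    intro i l n m
    rw [show (fun ω => v i n ω * s l m ω) = (fun ω => s l m ω * v i n ω) from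
      funext fun ω => mul_comm _ _]
    exact hsv l i m n
  set C : ℝ := σv ^ 2 * ∑ i, (w i) ^ 2 with hC_def
  have Ryy : ∀ n m : ℤ, ∫ ω, y n ω * y m ω =
      (∑ l, g l ^ 2 * ρ l (n - m)) + (if n = m then C else 0) := by
    intro n m
    rw [hprod, integral_finset_sum _ (fun a _ =>
      integrable_finset_sum _ fun b' _ => (hu_int a b' n m).const_mul _)]
    have step : ∀ a ∈ (univ : Finset (Fin L ⊕ Fin M)),
        (∫ ω, ∑ b', (c a * c b') * (u a n ω * u b' m ω))
          = ∑ b', (c a * c b') * ∫ ω, u a n ω * u b' m ω := by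
      intro a _
      rw [integral_finset_sum _ fun b' _ => (hu_int a b' n m).const_mul _]
      exact Finset.sum_congr rfl fun b' _ => integral_const_mul _ _
    rw [Finset.sum_congr rfl step]
    simp only [Fintype.sum_sum_type, hc_def, hu_def, Sum.elim_inl, Sum.elim_inr,
      hss', hsv, hvs, hvv, mul_zero, Finset.sum_const_zero, add_zero, zero_add,
      mul_ite, Finset.sum_ite_eq, Finset.mem_univ, if_true]
    by_cases hnm : n = m
    · subst hnm
      simp only [and_true, Finset.sum_ite_eq, Finset.mem_univ, if_true, if_pos rfl]
      congr 1
      · exact Finset.sum_congr rfl fun l _ => by ring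
      · rw [hC_def, Finset.mul_sum]
        exact Finset.sum_congr rfl fun i _ => by ring
    · simp only [hnm, and_false, if_false, mul_zero, Finset.sum_const_zero, add_zero]
      exact Finset.sum_congr rfl fun l _ => by ring
  have hEy : ∫ ω, (y n ω) ^ 2 = (∑ l, g l ^ 2 * ρ l 0) + C := by
    rw [show (fun ω => (y n ω) ^ 2) = fun ω => y n ω * y n ω from
      funext fun ω => pow_two (y n ω), Ryy n n, sub_self, if_pos rfl]
  set ε : ℕ → ℝ := fun p => if p = 0 then 1 else -1 with hε_def
  have e_rep : ∀ (n : ℤ) (ω : Ω),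
      e n ω = ∑ p ∈ Finset.range (P + 1), (ε p * b p) * y (n - (p : ℤ)) ω := by
    intro n ω
    rw [he, Finset.range_eq_Ico, Finset.sum_eq_sum_Ico_succ_bot (Nat.succ_pos P)]
    rw [show (0 + 1 : ℕ) = 1 from rfl, show Finset.Ico 1 P.succ = Finset.Icc 1 P from Finset.Ico_add_one_right_eq_Icc 1 P]
    have hterm : ∀ p ∈ Finset.Icc 1 P,
        (ε p * b p) * y (n - (p : ℤ)) ω = -(b p * y (n - (p : ℤ)) ω) := by
      intro p hp
      have hp1 : p ≠ 0 := by
        have := (Finset.mem_Icc.mp hp).1; omega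
      simp only [hε_def, if_neg hp1]; ring
    rw [Finset.sum_congr rfl hterm, Finset.sum_neg_distrib]
    simp only [hε_def, if_pos rfl, hb0, Nat.cast_zero, sub_zero, one_mul]
    ring
  have hEe : ∫ ω, (e n ω) ^ 2 =
      ∑ p ∈ Finset.range (P + 1), ∑ q ∈ Finset.range (P + 1),
        ((ε p * b p) * (ε q * b q)) *
          ((∑ l, g l ^ 2 * ρ l ((q : ℤ) - (p : ℤ))) + (if p = q then C else 0)) := by
    have key : (fun ω => (e n ω) ^ 2) = fun ω =>
        ∑ p ∈ Finset.range (P + 1), ∑ q ∈ Finset.range (P + 1),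
          ((ε p * b p) * (ε q * b q)) * (y (n - (p : ℤ)) ω * y (n - (q : ℤ)) ω) := by
      funext ω
      rw [sq, e_rep, Finset.sum_mul_sum]
      exact Finset.sum_congr rfl fun p _ => Finset.sum_congr rfl fun q _ => by ring
    rw [key, integral_finset_sum _ fun p _ =>
      integrable_finset_sum _ fun q _ => (hyy_int _ _).const_mul _]
    refine Finset.sum_congr rfl fun p _ => ?_
    rw [integral_finset_sum _ fun q _ => (hyy_int _ _).const_mul _]
    refine Finset.sum_congr rfl fun q _ => ?_
    rw [integral_const_mul, Ryy]
    have harg : (n - (p : ℤ)) - (n - (q : ℤ)) = (q : ℤ) - (p : ℤ) := by ring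
    rw [harg]
    congr 1
    congr 1
    simp only [sub_right_inj, Nat.cast_inj]
  -- final algebra
  rw [hEy, hEe]
  simp only [hg]
  -- abbreviations
  have hD : ∑ p ∈ Finset.range (P + 1), ∑ q ∈ Finset.range (P + 1),
      ((ε p * b p) * (ε q * b q)) * (if p = q then C else 0)
      = (∑ p ∈ Finset.range (P + 1), (b p) ^ 2) * C := by
    rw [Finset.sum_mul]
    refine Finset.sum_congr rfl fun p hp => ?_
    simp only [mul_ite, mul_zero, Finset.sum_ite_eq, hp, if_pos]
    by_cases h0 : p = 0
    · rw [show ε p = 1 from by simp [hε_def, h0]]; ring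
    · rw [show ε p = -1 from by simp [hε_def, h0]]; ring
  have hsplit : ∑ p ∈ Finset.range (P + 1), ∑ q ∈ Finset.range (P + 1),
      ((ε p * b p) * (ε q * b q)) *
        ((∑ l, g l ^ 2 * ρ l ((q : ℤ) - (p : ℤ))) + (if p = q then C else 0))
      = (∑ p ∈ Finset.range (P + 1), ∑ q ∈ Finset.range (P + 1),
          ((ε p * b p) * (ε q * b q)) * (∑ l, g l ^ 2 * ρ l ((q : ℤ) - (p : ℤ))))
        + (∑ p ∈ Finset.range (P + 1), (b p) ^ 2) * C := by
    rw [← hD, ← Finset.sum_add_distrib]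
    refine Finset.sum_congr rfl fun p _ => ?_
    rw [← Finset.sum_add_distrib]
    exact Finset.sum_congr rfl fun q _ => by ring
  rw [hsplit]
  have h1 : (∑ p ∈ Finset.range (P + 1), (b p) ^ 2) * ((∑ l, g l ^ 2 * ρ l 0) + C)
      = (∑ l, g l ^ 2 * (∑ p ∈ Finset.range (P + 1), (b p) ^ 2 * ρ l 0))
        + (∑ p ∈ Finset.range (P + 1), (b p) ^ 2) * C := by
    rw [mul_add]
    congr 1
    rw [Finset.mul_sum]
    refine Finset.sum_congr rfl fun l _ => ?_
    rw [Finset.mul_sum, Finset.sum_mul]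
    exact Finset.sum_congr rfl fun p _ => by ring
  rw [h1]
  have h2 : (∑ p ∈ Finset.range (P + 1), ∑ q ∈ Finset.range (P + 1),
      ((ε p * b p) * (ε q * b q)) * (∑ l, g l ^ 2 * ρ l ((q : ℤ) - (p : ℤ))))
      = ∑ l, g l ^ 2 * (∑ p ∈ Finset.range (P + 1), ∑ q ∈ Finset.range (P + 1),
          ((ε p * b p) * (ε q * b q)) * ρ l ((q : ℤ) - (p : ℤ))) := by
    have step1 : ∀ p ∈ Finset.range (P + 1),
        (∑ q ∈ Finset.range (P + 1),
          ((ε p * b p) * (ε q * b q)) * (∑ l, g l ^ 2 * ρ l ((q : ℤ) - (p : ℤ))))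
        = ∑ l, ∑ q ∈ Finset.range (P + 1),
            g l ^ 2 * (((ε p * b p) * (ε q * b q)) * ρ l ((q : ℤ) - (p : ℤ))) := by
      intro p _
      rw [Finset.sum_comm]
      refine Finset.sum_congr rfl fun q _ => ?_
      rw [Finset.mul_sum]
      exact Finset.sum_congr rfl fun l _ => by ring
    rw [Finset.sum_congr rfl step1, Finset.sum_comm]
    refine Finset.sum_congr rfl fun l _ => ?_
    rw [Finset.mul_sum]
    refine Finset.sum_congr rfl fun p _ => ?_
    rw [Finset.mul_sum]
  rw [h2]
  have perl : ∀ l : Fin L,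
      (∑ p ∈ Finset.range (P + 1), (b p) ^ 2 * ρ l 0)
        - (∑ p ∈ Finset.range (P + 1), ∑ q ∈ Finset.range (P + 1),
            ((ε p * b p) * (ε q * b q)) * ρ l ((q : ℤ) - (p : ℤ)))
      = ∑ p ∈ Finset.range (P + 1), ∑ q ∈ Finset.range (P + 1),
          if p ≠ q then
            (if p = 0 ∨ q = 0 then (1 : ℝ) else -1) * b p * b q * ρ l ((q : ℤ) - (p : ℤ))
          else 0 := by
    intro l
    have hsum_split : ∑ p ∈ Finset.range (P + 1), ∑ q ∈ Finset.range (P + 1),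
        ((ε p * b p) * (ε q * b q)) * ρ l ((q : ℤ) - (p : ℤ))
        = (∑ p ∈ Finset.range (P + 1), ∑ q ∈ Finset.range (P + 1),
            if p = q then ((ε p * b p) * (ε q * b q)) * ρ l ((q : ℤ) - (p : ℤ)) else 0)
          + (∑ p ∈ Finset.range (P + 1), ∑ q ∈ Finset.range (P + 1),
            if p ≠ q then ((ε p * b p) * (ε q * b q)) * ρ l ((q : ℤ) - (p : ℤ)) else 0) := by
      rw [← Finset.sum_add_distrib]
      refine Finset.sum_congr rfl fun p _ => ?_
      rw [← Finset.sum_add_distrib]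
      refine Finset.sum_congr rfl fun q _ => ?_
      by_cases h : p = q <;> simp [h]
    have hdiag : (∑ p ∈ Finset.range (P + 1), ∑ q ∈ Finset.range (P + 1),
        if p = q then ((ε p * b p) * (ε q * b q)) * ρ l ((q : ℤ) - (p : ℤ)) else 0)
        = ∑ p ∈ Finset.range (P + 1), (b p) ^ 2 * ρ l 0 := by
      refine Finset.sum_congr rfl fun p hp => ?_
      rw [Finset.sum_ite_eq, if_pos hp, sub_self]
      by_cases h0 : p = 0
      · rw [show ε p = 1 from by simp [hε_def, h0]]; ring
      · rw [show ε p = -1 from by simp [hε_def, h0]]; ring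
    have hoff : (∑ p ∈ Finset.range (P + 1), ∑ q ∈ Finset.range (P + 1),
        if p ≠ q then ((ε p * b p) * (ε q * b q)) * ρ l ((q : ℤ) - (p : ℤ)) else 0)
        = -(∑ p ∈ Finset.range (P + 1), ∑ q ∈ Finset.range (P + 1),
            if p ≠ q then
              (if p = 0 ∨ q = 0 then (1 : ℝ) else -1) * b p * b q * ρ l ((q : ℤ) - (p : ℤ))
            else 0) := by
      rw [← Finset.sum_neg_distrib]
      refine Finset.sum_congr rfl fun p _ => ?_
      rw [← Finset.sum_neg_distrib]
      refine Finset.sum_congr rfl fun q _ => ?_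
      by_cases h : p = q
      · simp [h]
      · rw [if_pos h, if_pos h]
        by_cases hp0 : p = 0 <;> by_cases hq0 : q = 0
        · exact absurd (hp0.trans hq0.symm) h
        · simp only [hε_def, if_pos hp0, if_neg hq0, hp0, true_or, if_pos]; ring
        · simp only [hε_def, if_neg hp0, if_pos hq0, hq0, or_true, if_pos]; ring
        · simp only [hε_def, if_neg hp0, if_neg hq0, hp0, hq0, or_self, if_neg,
            not_false_iff]; ring
    rw [hsum_split, hdiag, hoff]
    ring
  have final : ∀ l ∈ (univ : Finset (Fin L)),
      g l ^ 2 * (∑ p ∈ Finset.range (P + 1), (b p) ^ 2 * ρ l 0)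
        - g l ^ 2 * (∑ p ∈ Finset.range (P + 1), ∑ q ∈ Finset.range (P + 1),
            ((ε p * b p) * (ε q * b q)) * ρ l ((q : ℤ) - (p : ℤ)))
      = g l ^ 2 * (∑ p ∈ Finset.range (P + 1), ∑ q ∈ Finset.range (P + 1),
          if p ≠ q then
            (if p = 0 ∨ q = 0 then (1 : ℝ) else -1) * b p * b q * ρ l ((q : ℤ) - (p : ℤ))
          else 0) := by
    intro l _
    rw [← mul_sub, perl l]
  calc (∑ l, g l ^ 2 * (∑ p ∈ Finset.range (P + 1), (b p) ^ 2 * ρ l 0)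
        + (∑ p ∈ Finset.range (P + 1), (b p) ^ 2) * C)
      - ((∑ l, g l ^ 2 * (∑ p ∈ Finset.range (P + 1), ∑ q ∈ Finset.range (P + 1),
          ((ε p * b p) * (ε q * b q)) * ρ l ((q : ℤ) - (p : ℤ))))
        + (∑ p ∈ Finset.range (P + 1), (b p) ^ 2) * C)
      = ∑ l, (g l ^ 2 * (∑ p ∈ Finset.range (P + 1), (b p) ^ 2 * ρ l 0)
          - g l ^ 2 * (∑ p ∈ Finset.range (P + 1), ∑ q ∈ Finset.range (P + 1),
            ((ε p * b p) * (ε q * b q)) * ρ l ((q : ℤ) - (p : ℤ)))) := by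
        rw [Finset.sum_sub_distrib]; ring
    _ = _ := Finset.sum_congr rfl final
end

section
/- Under the noisy mixing model with stationary uncorrelated sources and white noise (as specified in the context), let b_0 = 1, b_1,…,b_P ∈ ℝ and d_0 = 1, d_1,…,d_{P_d} ∈ ℝ define two linear predictors with errors e[n] = y[n] − Σ_{p=1}^P b_p y[n−p] and f[n] = y[n] − Σ_{p=1}^{P_d} d_p y[n−p], and set q_c = Σ_{p=0}^P b_p², a_c = Σ_{p=0}^{P_d} d_p². Let g = Aᵀ w, r̂_l = Σ_{p,q=0, p≠q}^{P} s_{pq} b_p b_q ρ_l[q−p] and r̃_l = Σ_{p,q=0, p≠q}^{P_d} s_{pq} d_p d_q ρ_l[q−p]. If Σ_l g_l² r̃_l ≠ 0, then the dual-linear-predictor cost satisfies (q_c E[y[n]²] − E[e[n]²]) / (a_c E[y[n]²] − E[f[n]²]) = (Σ_l g_l² r̂_l)/(Σ_l g_l² r̃_l). In particular this ratio does not depend on the noise variance σ_v². -/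
open Matrix MeasureTheory Finset

private lemma sum_comm3' {ι κ μ N : Type*} [AddCommMonoid N] (s : Finset ι) (t : Finset κ)
    (u : Finset μ) (f : ι → κ → μ → N) :
    ∑ i ∈ s, ∑ j ∈ t, ∑ k ∈ u, f i j k = ∑ j ∈ t, ∑ k ∈ u, ∑ i ∈ s, f i j k := by
  rw [Finset.sum_comm]
  exact Finset.sum_congr rfl fun j _ => Finset.sum_comm

/-- Dual-linear-predictor cost as a noise-free ratio of quadratic forms: under the
noisy mixing model with stationary uncorrelated sources and white noise, with two
linear predictors (coefficients `b`, `d`, errors `e`, `f`), if `∑_l g_l² r̃_l ≠ 0`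
then `(q_c E[y²] − E[e²]) / (a_c E[y²] − E[f²]) = (∑_l g_l² r̂_l)/(∑_l g_l² r̃_l)`,
where `g = Aᵀ w`; in particular the ratio is independent of the noise variance. -/
theorem stmt_8 (Ω : Type*) [MeasureSpace Ω] [IsProbabilityMeasure (volume : Measure Ω)]
    (L M P Pd : ℕ)
    (s : Fin L → ℤ → Ω → ℝ) (v : Fin M → ℤ → Ω → ℝ)
    (ρ : Fin L → ℤ → ℝ) (σv : ℝ)
    (hss_int : ∀ (k l : Fin L) (n m : ℤ), Integrable fun ω => s k n ω * s l m ω)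
    (hsv_int : ∀ (l : Fin L) (i : Fin M) (n m : ℤ), Integrable fun ω => s l n ω * v i m ω)
    (hvv_int : ∀ (i j : Fin M) (n m : ℤ), Integrable fun ω => v i n ω * v j m ω)
    (hss : ∀ (k l : Fin L) (n m : ℤ),
      ∫ ω, s k n ω * s l m ω = if k = l then ρ l (n - m) else 0)
    (hvv : ∀ (i j : Fin M) (n m : ℤ),
      ∫ ω, v i n ω * v j m ω = if i = j ∧ n = m then σv ^ 2 else 0)
    (hsv : ∀ (l : Fin L) (i : Fin M) (n m : ℤ), ∫ ω, s l n ω * v i m ω = 0)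
    (A : Matrix (Fin M) (Fin L) ℝ) (w : Fin M → ℝ)
    (x : Fin M → ℤ → Ω → ℝ)
    (hx : ∀ i n ω, x i n ω = (∑ l, A i l * s l n ω) + v i n ω)
    (y : ℤ → Ω → ℝ) (hy : ∀ n ω, y n ω = ∑ i, w i * x i n ω)
    (b d : ℕ → ℝ) (hb0 : b 0 = 1) (hd0 : d 0 = 1)
    (qc ac : ℝ)
    (hqc : qc = ∑ p ∈ Finset.range (P + 1), (b p) ^ 2)
    (hac : ac = ∑ p ∈ Finset.range (Pd + 1), (d p) ^ 2)
    (e f : ℤ → Ω → ℝ)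
    (he : ∀ n ω, e n ω = y n ω - ∑ p ∈ Finset.Icc 1 P, b p * y (n - (p : ℤ)) ω)
    (hf : ∀ n ω, f n ω = y n ω - ∑ p ∈ Finset.Icc 1 Pd, d p * y (n - (p : ℤ)) ω)
    (g : Fin L → ℝ) (hg : g = Aᵀ *ᵥ w)
    (rhat rtil : Fin L → ℝ)
    (hrhat : ∀ l, rhat l = ∑ p ∈ Finset.range (P + 1), ∑ q ∈ Finset.range (P + 1),
      if p ≠ q then
        (if p = 0 ∨ q = 0 then (1 : ℝ) else -1) * b p * b q * ρ l ((q : ℤ) - (p : ℤ))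
      else 0)
    (hrtil : ∀ l, rtil l = ∑ p ∈ Finset.range (Pd + 1), ∑ q ∈ Finset.range (Pd + 1),
      if p ≠ q then
        (if p = 0 ∨ q = 0 then (1 : ℝ) else -1) * d p * d q * ρ l ((q : ℤ) - (p : ℤ))
      else 0)
    (hdenom : (∑ l, (g l) ^ 2 * rtil l) ≠ 0) :
    ∀ n : ℤ,
      (qc * (∫ ω, (y n ω) ^ 2) - ∫ ω, (e n ω) ^ 2) /
          (ac * (∫ ω, (y n ω) ^ 2) - ∫ ω, (f n ω) ^ 2) =
        (∑ l, (g l) ^ 2 * rhat l) / (∑ l, (g l) ^ 2 * rtil l) := by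
  intro n
  have hgdef : ∀ l, g l = ∑ i, w i * A i l := by
    intro l
    rw [hg]
    simp [Matrix.mulVec, dotProduct, Matrix.transpose_apply, mul_comm]
  have hyrep : ∀ (m : ℤ) (ω : Ω), y m ω = (∑ l, g l * s l m ω) + ∑ i, w i * v i m ω := by
    intro m ω
    rw [hy]
    simp only [hx, mul_add, Finset.sum_add_distrib, Finset.mul_sum]
    congr 1
    rw [Finset.sum_comm]
    refine Finset.sum_congr rfl fun l _ => ?_
    rw [hgdef, Finset.sum_mul]
    exact Finset.sum_congr rfl fun i _ => by ring
  set W : ℝ := ∑ i, (w i)^2 with hW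
  have ISS : ∀ nn mm : ℤ,
      Integrable (fun ω => (∑ l, g l * s l nn ω) * (∑ k, g k * s k mm ω)) ∧
      ∫ ω, (∑ l, g l * s l nn ω) * (∑ k, g k * s k mm ω)
        = ∑ l, (g l)^2 * ρ l (nn - mm) := by
    intro nn mm
    have hfe : (fun ω => (∑ l, g l * s l nn ω) * (∑ k, g k * s k mm ω))
        = fun ω => ∑ l, ∑ k, (g l * g k) * (s l nn ω * s k mm ω) := by
      funext ω
      rw [Finset.sum_mul_sum]
      exact Finset.sum_congr rfl fun l _ => Finset.sum_congr rfl fun k _ => by ring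
    rw [hfe]
    refine ⟨integrable_finset_sum _ fun l _ => integrable_finset_sum _ fun k _ =>
        (hss_int l k nn mm).const_mul _, ?_⟩
    rw [integral_finset_sum _ fun l _ => integrable_finset_sum _ fun k _ =>
        (hss_int l k nn mm).const_mul _]
    refine Finset.sum_congr rfl fun l _ => ?_
    rw [integral_finset_sum _ fun k _ => (hss_int l k nn mm).const_mul _]
    have h1 : ∀ k : Fin L, ∫ ω, (g l * g k) * (s l nn ω * s k mm ω)
        = if l = k then g l * g k * ρ k (nn - mm) else 0 := by
      intro k
      rw [integral_const_mul, hss]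
      by_cases h : l = k <;> simp [h]
    simp only [h1]
    rw [Finset.sum_ite_eq]
    simp [pow_two, mul_assoc]
  have ISV : ∀ nn mm : ℤ,
      Integrable (fun ω => (∑ l, g l * s l nn ω) * (∑ i, w i * v i mm ω)) ∧
      ∫ ω, (∑ l, g l * s l nn ω) * (∑ i, w i * v i mm ω) = 0 := by
    intro nn mm
    have hfe : (fun ω => (∑ l, g l * s l nn ω) * (∑ i, w i * v i mm ω))
        = fun ω => ∑ l, ∑ i, (g l * w i) * (s l nn ω * v i mm ω) := by
      funext ω
      rw [Finset.sum_mul_sum]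
      exact Finset.sum_congr rfl fun l _ => Finset.sum_congr rfl fun i _ => by ring
    rw [hfe]
    refine ⟨integrable_finset_sum _ fun l _ => integrable_finset_sum _ fun i _ =>
        (hsv_int l i nn mm).const_mul _, ?_⟩
    rw [integral_finset_sum _ fun l _ => integrable_finset_sum _ fun i _ =>
        (hsv_int l i nn mm).const_mul _]
    refine Finset.sum_eq_zero fun l _ => ?_
    rw [integral_finset_sum _ fun i _ => (hsv_int l i nn mm).const_mul _]
    refine Finset.sum_eq_zero fun i _ => ?_
    rw [integral_const_mul, hsv, mul_zero]
  have IVV : ∀ nn mm : ℤ,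
      Integrable (fun ω => (∑ i, w i * v i nn ω) * (∑ j, w j * v j mm ω)) ∧
      ∫ ω, (∑ i, w i * v i nn ω) * (∑ j, w j * v j mm ω)
        = if nn = mm then σv^2 * W else 0 := by
    intro nn mm
    have hfe : (fun ω => (∑ i, w i * v i nn ω) * (∑ j, w j * v j mm ω))
        = fun ω => ∑ i, ∑ j, (w i * w j) * (v i nn ω * v j mm ω) := by
      funext ω
      rw [Finset.sum_mul_sum]
      exact Finset.sum_congr rfl fun i _ => Finset.sum_congr rfl fun j _ => by ring
    rw [hfe]
    refine ⟨integrable_finset_sum _ fun i _ => integrable_finset_sum _ fun j _ =>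
        (hvv_int i j nn mm).const_mul _, ?_⟩
    rw [integral_finset_sum _ fun i _ => integrable_finset_sum _ fun j _ =>
        (hvv_int i j nn mm).const_mul _]
    have h3 : ∀ i : Fin M, ∫ ω, ∑ j, (w i * w j) * (v i nn ω * v j mm ω)
        = if nn = mm then w i * w i * σv^2 else 0 := by
      intro i
      rw [integral_finset_sum _ fun j _ => (hvv_int i j nn mm).const_mul _]
      have h1 : ∀ j : Fin M, ∫ ω, (w i * w j) * (v i nn ω * v j mm ω)
          = if i = j then (if nn = mm then w i * w j * σv^2 else 0) else 0 := by
        intro j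
        rw [integral_const_mul, hvv]
        by_cases hh : i = j <;> by_cases h2 : nn = mm <;> simp [hh, h2]
      simp only [h1]
      rw [Finset.sum_ite_eq]
      simp
    simp only [h3]
    by_cases h2 : nn = mm
    · simp only [h2, if_true]
      rw [hW, Finset.mul_sum]
      exact Finset.sum_congr rfl fun i _ => by ring
    · simp [h2]
  have key : ∀ nn mm : ℤ, Integrable (fun ω => y nn ω * y mm ω) ∧
      ∫ ω, y nn ω * y mm ω
        = (∑ l, (g l)^2 * ρ l (nn - mm)) + (if nn = mm then σv^2 * W else 0) := by
    intro nn mm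
    have hfe : (fun ω => y nn ω * y mm ω) = fun ω =>
        (∑ l, g l * s l nn ω) * (∑ k, g k * s k mm ω)
        + ((∑ l, g l * s l nn ω) * (∑ i, w i * v i mm ω)
        + ((∑ l, g l * s l mm ω) * (∑ i, w i * v i nn ω)
        + (∑ i, w i * v i nn ω) * (∑ j, w j * v j mm ω))) := by
      funext ω
      rw [hyrep nn, hyrep mm]
      ring
    rw [hfe]
    have h1 := ISS nn mm
    have h2 := ISV nn mm
    have h3 := ISV mm nn
    have h4 := IVV nn mm
    have G34 : Integrable (fun ω => (∑ l, g l * s l mm ω) * (∑ i, w i * v i nn ω)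
        + (∑ i, w i * v i nn ω) * (∑ j, w j * v j mm ω)) := h3.1.add h4.1
    have G234 : Integrable (fun ω => (∑ l, g l * s l nn ω) * (∑ i, w i * v i mm ω)
        + ((∑ l, g l * s l mm ω) * (∑ i, w i * v i nn ω)
          + (∑ i, w i * v i nn ω) * (∑ j, w j * v j mm ω))) := h2.1.add G34
    refine ⟨h1.1.add G234, ?_⟩
    rw [integral_add h1.1 G234, integral_add h2.1 G34, integral_add h3.1 h4.1,
        h1.2, h2.2, h3.2, h4.2]
    simp only [zero_add]
  have hy2 : ∫ ω, (y n ω)^2 = (∑ l, (g l)^2 * ρ l 0) + σv^2 * W := by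
    simpa [pow_two] using (key n n).2
  have main : ∀ (N : ℕ) (bb : ℕ → ℝ), bb 0 = 1 →
      (∑ p ∈ Finset.range (N+1), (bb p)^2) * (∫ ω, (y n ω)^2)
        - (∫ ω, (y n ω - ∑ p ∈ Finset.Icc 1 N, bb p * y (n - (p:ℤ)) ω)^2)
      = ∑ l, (g l)^2 * (∑ p ∈ Finset.range (N+1), ∑ q ∈ Finset.range (N+1),
          if p ≠ q then (if p = 0 ∨ q = 0 then (1:ℝ) else -1) * bb p * bb q * ρ l ((q:ℤ)-(p:ℤ))
          else 0) := by
    intro N bb hbb0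
    set c : ℕ → ℝ := fun p => if p = 0 then 1 else -bb p with hc
    have hcv : ∀ p, c p = if p = 0 then 1 else -bb p := fun p => rfl
    have hcc : ∀ p, c p * c p = (bb p)^2 := by
      intro p
      rw [hcv]
      by_cases h : p = 0
      · rw [if_pos h, h, hbb0]; norm_num
      · rw [if_neg h]; ring
    have hrange : Finset.range (N+1) = insert 0 (Finset.Icc 1 N) := by
      ext a; simp; omega
    have hzrep : ∀ ω, y n ω - ∑ p ∈ Finset.Icc 1 N, bb p * y (n - (p:ℤ)) ω
        = ∑ p ∈ Finset.range (N+1), c p * y (n - (p:ℤ)) ω := by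
      intro ω
      rw [hrange, Finset.sum_insert (by simp)]
      have h1 : ∑ p ∈ Finset.Icc 1 N, c p * y (n - (p:ℤ)) ω
          = -∑ p ∈ Finset.Icc 1 N, bb p * y (n - (p:ℤ)) ω := by
        rw [← Finset.sum_neg_distrib]
        refine Finset.sum_congr rfl fun p hp => ?_
        have hp0 : p ≠ 0 := by
          simp only [Finset.mem_Icc] at hp; omega
        rw [hcv, if_neg hp0]
        ring
      rw [h1]
      simp [hc, sub_eq_add_neg]
    have hsq : (fun ω => (y n ω - ∑ p ∈ Finset.Icc 1 N, bb p * y (n-(p:ℤ)) ω)^2)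
        = fun ω => ∑ p ∈ Finset.range (N+1), ∑ q ∈ Finset.range (N+1),
            (c p * c q) * (y (n-(p:ℤ)) ω * y (n-(q:ℤ)) ω) := by
      funext ω
      rw [hzrep, pow_two, Finset.sum_mul_sum]
      exact Finset.sum_congr rfl fun p _ => Finset.sum_congr rfl fun q _ => by ring
    have hIz : (∫ ω, (y n ω - ∑ p ∈ Finset.Icc 1 N, bb p * y (n-(p:ℤ)) ω)^2)
        = ∑ p ∈ Finset.range (N+1), ∑ q ∈ Finset.range (N+1), (c p * c q) *
            ((∑ l, (g l)^2 * ρ l ((q:ℤ)-(p:ℤ))) + (if p = q then σv^2*W else 0)) := by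
      rw [show (∫ ω, (y n ω - ∑ p ∈ Finset.Icc 1 N, bb p * y (n-(p:ℤ)) ω)^2)
          = ∫ ω, ∑ p ∈ Finset.range (N+1), ∑ q ∈ Finset.range (N+1),
              (c p * c q) * (y (n-(p:ℤ)) ω * y (n-(q:ℤ)) ω) from congrArg _ hsq]
      rw [integral_finset_sum _ fun p _ => integrable_finset_sum _ fun q _ =>
          ((key _ _).1).const_mul _]
      refine Finset.sum_congr rfl fun p _ => ?_
      rw [integral_finset_sum _ fun q _ => ((key _ _).1).const_mul _]
      refine Finset.sum_congr rfl fun q _ => ?_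
      rw [integral_const_mul, (key _ _).2]
      have hd : (n - (p:ℤ)) - (n - (q:ℤ)) = (q:ℤ) - (p:ℤ) := by ring
      rw [hd]
      congr 1
      by_cases h : p = q
      · simp [h]
      · rw [if_neg (fun hcon => h (by omega)), if_neg h]
    have hswap : ∑ p ∈ Finset.range (N+1), ∑ q ∈ Finset.range (N+1), (c p * c q) *
            ((∑ l, (g l)^2 * ρ l ((q:ℤ)-(p:ℤ))) + (if p = q then σv^2*W else 0))
        = (∑ l, (g l)^2 * ∑ p ∈ Finset.range (N+1), ∑ q ∈ Finset.range (N+1),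
            (c p * c q) * ρ l ((q:ℤ)-(p:ℤ)))
          + (∑ p ∈ Finset.range (N+1), (bb p)^2) * (σv^2 * W) := by
      simp only [mul_add, Finset.sum_add_distrib]
      congr 1
      · simp only [Finset.mul_sum]
        conv_rhs => rw [sum_comm3']
        exact Finset.sum_congr rfl fun p _ => Finset.sum_congr rfl fun q _ =>
          Finset.sum_congr rfl fun l _ => by ring
      · simp only [mul_ite, mul_zero]
        rw [Finset.sum_mul]
        refine Finset.sum_congr rfl fun p hp => ?_
        rw [Finset.sum_ite_eq, if_pos hp, hcc]
    have hperl : ∀ l : Fin L, (∑ p ∈ Finset.range (N+1), (bb p)^2) * ρ l 0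
        - ∑ p ∈ Finset.range (N+1), ∑ q ∈ Finset.range (N+1),
            (c p * c q) * ρ l ((q:ℤ)-(p:ℤ))
      = ∑ p ∈ Finset.range (N+1), ∑ q ∈ Finset.range (N+1),
          if p ≠ q then (if p = 0 ∨ q = 0 then (1:ℝ) else -1) * bb p * bb q * ρ l ((q:ℤ)-(p:ℤ))
          else 0 := by
      intro l
      have h0 : (∑ p ∈ Finset.range (N+1), (bb p)^2) * ρ l 0
          = ∑ p ∈ Finset.range (N+1), ∑ q ∈ Finset.range (N+1),
              if p = q then (c p * c q) * ρ l ((q:ℤ)-(p:ℤ)) else 0 := by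
        rw [Finset.sum_mul]
        refine Finset.sum_congr rfl fun p hp => ?_
        rw [Finset.sum_ite_eq, if_pos hp, hcc]
        simp
      rw [h0, ← Finset.sum_sub_distrib]
      refine Finset.sum_congr rfl fun p _ => ?_
      rw [← Finset.sum_sub_distrib]
      refine Finset.sum_congr rfl fun q _ => ?_
      by_cases h : p = q
      · simp [h]
      · rw [if_neg h, if_pos h]
        by_cases hp0 : p = 0
        · have hq0 : ¬ q = 0 := fun hq => h (hp0.trans hq.symm)
          rw [hcv p, hcv q, if_pos hp0, if_neg hq0, if_pos (Or.inl hp0), hp0, hbb0]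
          ring
        · by_cases hq0 : q = 0
          · rw [hcv p, hcv q, if_neg hp0, if_pos hq0, if_pos (Or.inr hq0), hq0, hbb0]
            ring
          · rw [hcv p, hcv q, if_neg hp0, if_neg hq0,
              if_neg (by simp [hp0, hq0])]
            ring
    rw [hy2, hIz, hswap]
    rw [show (∑ p ∈ Finset.range (N+1), (bb p)^2) * ((∑ l, (g l)^2 * ρ l 0) + σv^2 * W)
        - ((∑ l, (g l)^2 * ∑ p ∈ Finset.range (N+1), ∑ q ∈ Finset.range (N+1),
            (c p * c q) * ρ l ((q:ℤ)-(p:ℤ)))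
          + (∑ p ∈ Finset.range (N+1), (bb p)^2) * (σv^2 * W))
      = (∑ p ∈ Finset.range (N+1), (bb p)^2) * (∑ l, (g l)^2 * ρ l 0)
        - (∑ l, (g l)^2 * ∑ p ∈ Finset.range (N+1), ∑ q ∈ Finset.range (N+1),
            (c p * c q) * ρ l ((q:ℤ)-(p:ℤ))) from by ring]
    rw [Finset.mul_sum, ← Finset.sum_sub_distrib]
    refine Finset.sum_congr rfl fun l _ => ?_
    rw [← hperl l]
    ring
  simp only [he, hf, hrhat, hrtil, hqc, hac]
  rw [main P b hb0, main Pd d hd0]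
end

section
/- Let A be an invertible real L×L matrix and let r̂_0,…,r̂_{L−1}, r̃_0,…,r̃_{L−1} be real numbers with every r̃_l > 0 and the ratios r̂_l/r̃_l pairwise distinct; let l* be the index minimizing r̂_l/r̃_l. For w ∈ ℝ^L with Aᵀ w ≠ 0 define J(w) = (Σ_l (Aᵀw)_l² r̂_l)/(Σ_l (Aᵀw)_l² r̃_l). Then J(w) ≥ r̂_{l*}/r̃_{l*} for all such w, with equality if and only if Aᵀ w is a nonzero scalar multiple of the standard basis vector e_{l*}. In particular, minimizing J over all w with Aᵀ w ≠ 0 results in extraction of the source with the minimum 'normalized' autocorrelation value r̂_l/r̃_l. -/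
open Matrix

lemma aux_bound (L : ℕ) (rhat rtil : Fin L → ℝ) (hrtil : ∀ l, 0 < rtil l)
    (lstar : Fin L) (hmin : ∀ l, rhat lstar / rtil lstar ≤ rhat l / rtil l)
    (g : Fin L → ℝ) (hg : g ≠ 0) :
    0 < ∑ l, (g l) ^ 2 * rtil l ∧
    rhat lstar / rtil lstar ≤ (∑ l, (g l) ^ 2 * rhat l) / (∑ l, (g l) ^ 2 * rtil l) := by
  obtain ⟨i, hi⟩ := Function.ne_iff.mp hg
  have hi' : g i ≠ 0 := by simpa using hi
  have hD : 0 < ∑ l, (g l) ^ 2 * rtil l := by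
    apply Finset.sum_pos' (fun l _ => mul_nonneg (sq_nonneg _) (hrtil l).le)
    exact ⟨i, Finset.mem_univ i,
      mul_pos (by positivity) (hrtil i)⟩
  refine ⟨hD, ?_⟩
  rw [le_div_iff₀ hD]
  calc rhat lstar / rtil lstar * ∑ l, (g l) ^ 2 * rtil l
      = ∑ l, (g l) ^ 2 * (rhat lstar / rtil lstar * rtil l) := by
        rw [Finset.mul_sum]; apply Finset.sum_congr rfl; intro l _; ring
    _ ≤ ∑ l, (g l) ^ 2 * rhat l := by
        apply Finset.sum_le_sum
        intro l _
        have h1 : rhat lstar / rtil lstar * rtil l ≤ rhat l := by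
          rw [← le_div_iff₀ (hrtil l)]; exact hmin l
        nlinarith [sq_nonneg (g l)]

lemma aux_single (L : ℕ) (r : Fin L → ℝ) (lstar : Fin L) (c : ℝ) :
    (∑ l, ((c • (Pi.single lstar 1 : Fin L → ℝ)) l) ^ 2 * r l) = c ^ 2 * r lstar := by
  rw [Finset.sum_eq_single lstar]
  · simp
  · intro b _ hb; simp [Pi.single_apply, hb]
  · simp

/-- Dual-linear-predictor extraction principle: for invertible `A`, positive `r̃ l`,
pairwise distinct ratios `r̂ l / r̃ l` minimized at `lstar`, the cost
`J(w) = (∑_l (Aᵀw)_l² r̂_l)/(∑_l (Aᵀw)_l² r̃_l)` satisfies `J(w) ≥ r̂ lstar / r̃ lstar`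
for all `w` with `Aᵀ w ≠ 0`, with equality iff `Aᵀ w` is a nonzero scalar multiple
of `e_{lstar}`; the minimum is attained, i.e. minimizing `J` extracts the source
with the minimum normalized autocorrelation. -/
theorem stmt_10 (L : ℕ) (hL : 1 ≤ L) (A : Matrix (Fin L) (Fin L) ℝ) (hA : IsUnit A)
    (rhat rtil : Fin L → ℝ) (hrtil : ∀ l, 0 < rtil l)
    (hdist : ∀ i j : Fin L, i ≠ j → rhat i / rtil i ≠ rhat j / rtil j)
    (lstar : Fin L) (hmin : ∀ l, rhat lstar / rtil lstar ≤ rhat l / rtil l) :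
    (∀ w : Fin L → ℝ, Aᵀ *ᵥ w ≠ 0 →
      rhat lstar / rtil lstar ≤
        (∑ l, ((Aᵀ *ᵥ w) l) ^ 2 * rhat l) / (∑ l, ((Aᵀ *ᵥ w) l) ^ 2 * rtil l)) ∧
    (∀ w : Fin L → ℝ, Aᵀ *ᵥ w ≠ 0 →
      ((∑ l, ((Aᵀ *ᵥ w) l) ^ 2 * rhat l) / (∑ l, ((Aᵀ *ᵥ w) l) ^ 2 * rtil l) =
          rhat lstar / rtil lstar ↔
        ∃ c : ℝ, c ≠ 0 ∧ Aᵀ *ᵥ w = c • (Pi.single lstar 1 : Fin L → ℝ))) ∧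
    (∃ w : Fin L → ℝ, Aᵀ *ᵥ w ≠ 0 ∧
      (∑ l, ((Aᵀ *ᵥ w) l) ^ 2 * rhat l) / (∑ l, ((Aᵀ *ᵥ w) l) ^ 2 * rtil l) =
        rhat lstar / rtil lstar) := by
  have hsingle : ∀ c : ℝ, c ≠ 0 →
      (∑ l, ((c • (Pi.single lstar 1 : Fin L → ℝ)) l) ^ 2 * rhat l) /
        (∑ l, ((c • (Pi.single lstar 1 : Fin L → ℝ)) l) ^ 2 * rtil l) =
        rhat lstar / rtil lstar := by
    intro c hc
    rw [aux_single, aux_single, mul_div_mul_left _ _ (by positivity : (c:ℝ)^2 ≠ 0)]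
  refine ⟨fun w hw => (aux_bound L rhat rtil hrtil lstar hmin _ hw).2, ?_, ?_⟩
  · intro w hw
    set g := Aᵀ *ᵥ w with hgdef
    obtain ⟨hD, hle⟩ := aux_bound L rhat rtil hrtil lstar hmin g hw
    constructor
    · intro heq
      have hN : (∑ l, (g l) ^ 2 * rhat l) =
          rhat lstar / rtil lstar * ∑ l, (g l) ^ 2 * rtil l := by
        rw [div_eq_iff hD.ne'] at heq
        linarith [heq]
      have hzero : ∑ l, (g l) ^ 2 * (rhat l - rhat lstar / rtil lstar * rtil l) = 0 := by
        have : ∑ l, (g l) ^ 2 * (rhat l - rhat lstar / rtil lstar * rtil l)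
            = (∑ l, (g l) ^ 2 * rhat l) - rhat lstar / rtil lstar * ∑ l, (g l) ^ 2 * rtil l := by
          rw [Finset.mul_sum, ← Finset.sum_sub_distrib]
          apply Finset.sum_congr rfl; intro l _; ring
        rw [this, hN]; ring
      have hterm : ∀ l ∈ Finset.univ, (g l) ^ 2 * (rhat l - rhat lstar / rtil lstar * rtil l) = 0 := by
        apply (Finset.sum_eq_zero_iff_of_nonneg ?_).mp hzero
        intro l _
        have h1 : rhat lstar / rtil lstar * rtil l ≤ rhat l := by
          rw [← le_div_iff₀ (hrtil l)]; exact hmin l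
        nlinarith [sq_nonneg (g l)]
      have hgl : ∀ l, l ≠ lstar → g l = 0 := by
        intro l hl
        have h2 : rhat lstar / rtil lstar < rhat l / rtil l :=
          lt_of_le_of_ne (hmin l) (fun h => hdist l lstar hl h.symm)
        have h3 : rhat lstar / rtil lstar * rtil l < rhat l := by
          rw [← lt_div_iff₀ (hrtil l)]; exact h2
        have := hterm l (Finset.mem_univ l)
        have h4 : (g l) ^ 2 = 0 := by
          rcases mul_eq_zero.mp this with h | h
          · exact h
          · linarith
        exact pow_eq_zero_iff (n := 2) (by norm_num) |>.mp h4
      have hcl : g lstar ≠ 0 := by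
        intro h0
        apply hw
        funext l
        by_cases hl : l = lstar
        · subst hl; exact h0
        · exact hgl l hl
      refine ⟨g lstar, hcl, ?_⟩
      funext l
      by_cases hl : l = lstar
      · subst hl; simp
      · simp [Pi.single_apply, hl, hgl l hl]
    · rintro ⟨c, hc, hgc⟩
      rw [hgdef] at hgc ⊢
      rw [hgc]
      exact hsingle c hc
  · refine ⟨(Aᵀ)⁻¹ *ᵥ (Pi.single lstar 1), ?_⟩
    have hAT : IsUnit (Aᵀ).det := by
      rw [Matrix.det_transpose]
      exact (Matrix.isUnit_iff_isUnit_det A).mp hA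
    have hmv : Aᵀ *ᵥ ((Aᵀ)⁻¹ *ᵥ (Pi.single lstar 1)) = (Pi.single lstar 1 : Fin L → ℝ) := by
      rw [Matrix.mulVec_mulVec, Matrix.mul_nonsing_inv _ hAT, Matrix.one_mulVec]
    rw [hmv]
    constructor
    · intro h
      have := congrFun h lstar
      simp at this
    · have h1 := hsingle 1 one_ne_zero
      simpa using h1
end

section
/- Let A be an invertible real L×L matrix, and let D_1, D_0 be real diagonal L×L matrices with diagonal entries d1_l and d0_l, where every d0_l ≠ 0. Set R_Δ = A D_1 Aᵀ and R_0 = A D_0 Aᵀ. Then: (i) for every l, the vector w_l = (Aᵀ)⁻¹ e_l satisfies the generalized eigenvalue equation R_Δ w_l = (d1_l/d0_l) R_0 w_l; (ii) if moreover the ratios d1_l/d0_l are pairwise distinct, then for every nonzero w ∈ ℝ^L and λ ∈ ℝ with R_Δ w = λ R_0 w, there exists l such that λ = d1_l/d0_l and w is a scalar multiple of (Aᵀ)⁻¹ e_l. Hence the generalized eigenvectors of the pencil (R_Δ, R_0) are, up to scaling, exactly the rows of the demixing matrix A⁻¹, and all sources are recovered. -/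
open Matrix

/-- CCA as a generalized eigenvalue problem: with `R_Δ = A D₁ Aᵀ` and `R₀ = A D₀ Aᵀ`
for invertible `A` and diagonal `D₁, D₀` (with `d0 l ≠ 0`):
(i) each `w_l = (Aᵀ)⁻¹ e_l` satisfies `R_Δ w_l = (d1 l / d0 l) R₀ w_l`;
(ii) if the ratios `d1 l / d0 l` are pairwise distinct, every generalized eigenpair
`(λ, w)` with `w ≠ 0` has `λ = d1 l / d0 l` and `w` a scalar multiple of `(Aᵀ)⁻¹ e_l`
for some `l`: the generalized eigenvectors are, up to scaling, the rows of `A⁻¹`. -/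
theorem stmt_12 (L : ℕ) (hL : 1 ≤ L) (A : Matrix (Fin L) (Fin L) ℝ) (hA : IsUnit A)
    (d1 d0 : Fin L → ℝ) (hd0 : ∀ l, d0 l ≠ 0) :
    (∀ l : Fin L,
      (A * Matrix.diagonal d1 * Aᵀ) *ᵥ ((Aᵀ)⁻¹ *ᵥ (Pi.single l 1 : Fin L → ℝ)) =
        (d1 l / d0 l) •
          ((A * Matrix.diagonal d0 * Aᵀ) *ᵥ ((Aᵀ)⁻¹ *ᵥ (Pi.single l 1 : Fin L → ℝ)))) ∧
    ((∀ i j : Fin L, i ≠ j → d1 i / d0 i ≠ d1 j / d0 j) →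
      ∀ w : Fin L → ℝ, w ≠ 0 → ∀ lam : ℝ,
        (A * Matrix.diagonal d1 * Aᵀ) *ᵥ w =
            lam • ((A * Matrix.diagonal d0 * Aᵀ) *ᵥ w) →
          ∃ l : Fin L, lam = d1 l / d0 l ∧
            ∃ c : ℝ, w = c • ((Aᵀ)⁻¹ *ᵥ (Pi.single l 1 : Fin L → ℝ))) := by
  have hdet : IsUnit A.det := (Matrix.isUnit_iff_isUnit_det A).mp hA
  have hdetT : IsUnit Aᵀ.det := by rwa [Matrix.det_transpose]
  have hTmul : Aᵀ * (Aᵀ)⁻¹ = 1 := Matrix.mul_nonsing_inv _ hdetT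
  have hTmul' : (Aᵀ)⁻¹ * Aᵀ = 1 := Matrix.nonsing_inv_mul _ hdetT
  have key : ∀ (d : Fin L → ℝ) (v : Fin L → ℝ),
      (A * Matrix.diagonal d * Aᵀ) *ᵥ ((Aᵀ)⁻¹ *ᵥ v) = A *ᵥ (Matrix.diagonal d *ᵥ v) := by
    intro d v
    rw [Matrix.mulVec_mulVec, Matrix.mul_assoc, Matrix.mul_assoc, hTmul, Matrix.mul_one,
      ← Matrix.mulVec_mulVec]
  constructor
  · intro l
    rw [key, key, ← Matrix.mulVec_smul]
    have h1 : Matrix.diagonal d1 *ᵥ (Pi.single l 1 : Fin L → ℝ) = Pi.single l (d1 l) := by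
      simpa using Matrix.diagonal_mulVec_single d1 l (1:ℝ)
    have h0 : Matrix.diagonal d0 *ᵥ (Pi.single l 1 : Fin L → ℝ) = Pi.single l (d0 l) := by
      simpa using Matrix.diagonal_mulVec_single d0 l (1:ℝ)
    have harg : (d1 l / d0 l) • (Pi.single l (d0 l) : Fin L → ℝ) = Pi.single l (d1 l) := by
      funext i
      rcases eq_or_ne i l with rfl | h
      · simp only [Pi.smul_apply, Pi.single_eq_same, smul_eq_mul]
        exact div_mul_cancel₀ _ (hd0 i)
      · simp [Pi.single_apply, h]
    rw [h1, h0, harg]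
  · intro hdist w hw lam heq
    set v : Fin L → ℝ := Aᵀ *ᵥ w with hv
    have hwv : w = (Aᵀ)⁻¹ *ᵥ v := by
      rw [hv, Matrix.mulVec_mulVec, hTmul', Matrix.one_mulVec]
    have heq2 : Matrix.diagonal d1 *ᵥ v = lam • (Matrix.diagonal d0 *ᵥ v) := by
      have hinj : Function.Injective (A.mulVec) := Matrix.mulVec_injective_iff_isUnit.mpr hA
      apply hinj
      rw [Matrix.mulVec_smul]
      calc A *ᵥ (Matrix.diagonal d1 *ᵥ v)
          = (A * Matrix.diagonal d1 * Aᵀ) *ᵥ ((Aᵀ)⁻¹ *ᵥ v) := (key _ _).symm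
        _ = lam • ((A * Matrix.diagonal d0 * Aᵀ) *ᵥ w) := by rw [← hwv, heq]
        _ = lam • ((A * Matrix.diagonal d0 * Aᵀ) *ᵥ ((Aᵀ)⁻¹ *ᵥ v)) := by rw [← hwv]
        _ = lam • (A *ᵥ (Matrix.diagonal d0 *ᵥ v)) := by rw [key]
    have hcomp : ∀ i, d1 i * v i = lam * (d0 i * v i) := by
      intro i
      have := congrFun heq2 i
      simpa [Matrix.mulVec_diagonal] using this
    have hvne : v ≠ 0 := by
      intro h0
      exact hw (by rw [hwv, h0, Matrix.mulVec_zero])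
    obtain ⟨l, hl⟩ : ∃ l, v l ≠ 0 := by
      by_contra h
      push_neg at h
      exact hvne (funext h)
    have ratio : ∀ i, v i ≠ 0 → lam = d1 i / d0 i := by
      intro i hi
      have h2 : d1 i * v i = (lam * d0 i) * v i := by rw [hcomp i]; ring
      have h3 := mul_right_cancel₀ hi h2
      rw [eq_div_iff (hd0 i)]
      linarith
    have hlam : lam = d1 l / d0 l := ratio l hl
    refine ⟨l, hlam, v l, ?_⟩
    have harg : v = v l • (Pi.single l 1 : Fin L → ℝ) := by
      funext i
      rcases eq_or_ne i l with rfl | h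
      · simp
      · simp only [Pi.smul_apply, Pi.single_apply, if_neg h, smul_eq_mul, mul_zero]
        by_contra hvi
        exact hdist i l h ((ratio i hvi) ▸ hlam ▸ rfl)
    rw [hwv, ← Matrix.mulVec_smul, ← harg]
end

section
/- Under the noisy mixing model with stationary uncorrelated sources and white noise (as specified in the context), let y_0[n] = wᵀ x[n] and e_0[n] = Σ_{p=2}^{P+1} b_p y_0[n−p] for real coefficients b_2,…,b_{P+1}. Then E[y_0[n] e_0[n]] = Σ_{l=0}^{L−1} g_l² (Σ_{p=2}^{P+1} b_p ρ_l[p]) and E[y_0[n] y_0[n−1]] = Σ_{l=0}^{L−1} g_l² ρ_l[1], where g = Aᵀ w. In particular, the cost J(w) = E[y_0[n] e_0[n]] / E[y_0[n] y_0[n−1]] of the direct adaptive generalized-CCA algorithm involves no contribution from the noise. -/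
open Matrix MeasureTheory Finset

/-- Noise-free numerator and denominator of the direct adaptive GCCA cost: under the
noisy mixing model with stationary uncorrelated sources and white noise, with
`y₀[n] = wᵀ x[n]` and `e₀[n] = ∑_{p=2}^{P+1} b p y₀[n−p]`, one has
`E[y₀[n] e₀[n]] = ∑_l g_l² (∑_{p=2}^{P+1} b p ρ_l[p])` and
`E[y₀[n] y₀[n−1]] = ∑_l g_l² ρ_l[1]` with `g = Aᵀ w`; so the cost
`J(w) = E[y₀ e₀]/E[y₀[n] y₀[n−1]]` involves no contribution from the noise. -/
theorem stmt_13 (Ω : Type*) [MeasureSpace Ω] [IsProbabilityMeasure (volume : Measure Ω)]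
    (L M P : ℕ)
    (s : Fin L → ℤ → Ω → ℝ) (v : Fin M → ℤ → Ω → ℝ)
    (ρ : Fin L → ℤ → ℝ) (σv : ℝ)
    (hss_int : ∀ (k l : Fin L) (n m : ℤ), Integrable fun ω => s k n ω * s l m ω)
    (hsv_int : ∀ (l : Fin L) (i : Fin M) (n m : ℤ), Integrable fun ω => s l n ω * v i m ω)
    (hvv_int : ∀ (i j : Fin M) (n m : ℤ), Integrable fun ω => v i n ω * v j m ω)
    (hss : ∀ (k l : Fin L) (n m : ℤ),
      ∫ ω, s k n ω * s l m ω = if k = l then ρ l (n - m) else 0)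
    (hvv : ∀ (i j : Fin M) (n m : ℤ),
      ∫ ω, v i n ω * v j m ω = if i = j ∧ n = m then σv ^ 2 else 0)
    (hsv : ∀ (l : Fin L) (i : Fin M) (n m : ℤ), ∫ ω, s l n ω * v i m ω = 0)
    (A : Matrix (Fin M) (Fin L) ℝ) (w : Fin M → ℝ)
    (x : Fin M → ℤ → Ω → ℝ)
    (hx : ∀ i n ω, x i n ω = (∑ l, A i l * s l n ω) + v i n ω)
    (y : ℤ → Ω → ℝ) (hy : ∀ n ω, y n ω = ∑ i, w i * x i n ω)
    (b : ℕ → ℝ)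
    (e : ℤ → Ω → ℝ)
    (he : ∀ n ω, e n ω = ∑ p ∈ Finset.Icc 2 (P + 1), b p * y (n - (p : ℤ)) ω)
    (g : Fin L → ℝ) (hg : g = Aᵀ *ᵥ w) :
    ∀ n : ℤ,
      (∫ ω, y n ω * e n ω =
        ∑ l, (g l) ^ 2 * ∑ p ∈ Finset.Icc 2 (P + 1), b p * ρ l (p : ℤ)) ∧
      (∫ ω, y n ω * y (n - 1) ω = ∑ l, (g l) ^ 2 * ρ l 1) := by
  have hg' : ∀ l, g l = ∑ i, w i * A i l := by
    intro l
    rw [hg]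
    simp [Matrix.mulVec, dotProduct, Matrix.transpose_apply, mul_comm]
  have hyY : ∀ (n : ℤ) (ω : Ω),
      y n ω = (∑ l, g l * s l n ω) + ∑ i, w i * v i n ω := by
    intro n ω
    simp only [hy, hx, mul_add, Finset.sum_add_distrib, Finset.mul_sum]
    congr 1
    rw [Finset.sum_comm]
    refine Finset.sum_congr rfl fun l _ => ?_
    rw [hg', Finset.sum_mul]
    exact Finset.sum_congr rfl fun i _ => by ring
  have expand : ∀ (n m : ℤ) (ω : Ω), y n ω * y m ω =
      ((∑ k, ∑ l, (g k * g l) * (s k n ω * s l m ω))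
      + ∑ k, ∑ i, (g k * w i) * (s k n ω * v i m ω))
      + ((∑ l, ∑ i, (g l * w i) * (s l m ω * v i n ω))
      + ∑ i, ∑ j, (w i * w j) * (v i n ω * v j m ω)) := by
    intro n m ω
    rw [hyY, hyY, add_mul, mul_add, mul_add]
    congr 1
    · congr 1
      · rw [Finset.sum_mul_sum]
        exact Finset.sum_congr rfl fun k _ => Finset.sum_congr rfl fun l _ => by ring
      · rw [Finset.sum_mul_sum]
        exact Finset.sum_congr rfl fun k _ => Finset.sum_congr rfl fun i _ => by ring
    · congr 1
      · rw [Finset.sum_mul_sum, Finset.sum_comm]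
        exact Finset.sum_congr rfl fun l _ => Finset.sum_congr rfl fun i _ => by ring
      · rw [Finset.sum_mul_sum]
        exact Finset.sum_congr rfl fun i _ => Finset.sum_congr rfl fun j _ => by ring
  have int1 : ∀ (n m : ℤ), Integrable
      (fun ω => ∑ k, ∑ l, (g k * g l) * (s k n ω * s l m ω)) :=
    fun n m => integrable_finset_sum _ fun k _ =>
      integrable_finset_sum _ fun l _ => (hss_int k l n m).const_mul _
  have int2 : ∀ (n m : ℤ), Integrable
      (fun ω => ∑ k, ∑ i, (g k * w i) * (s k n ω * v i m ω)) :=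
    fun n m => integrable_finset_sum _ fun k _ =>
      integrable_finset_sum _ fun i _ => (hsv_int k i n m).const_mul _
  have int3 : ∀ (n m : ℤ), Integrable
      (fun ω => ∑ l, ∑ i, (g l * w i) * (s l m ω * v i n ω)) :=
    fun n m => integrable_finset_sum _ fun l _ =>
      integrable_finset_sum _ fun i _ => (hsv_int l i m n).const_mul _
  have int4 : ∀ (n m : ℤ), Integrable
      (fun ω => ∑ i, ∑ j, (w i * w j) * (v i n ω * v j m ω)) :=
    fun n m => integrable_finset_sum _ fun i _ =>
      integrable_finset_sum _ fun j _ => (hvv_int i j n m).const_mul _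
  have yy_int : ∀ (n m : ℤ), Integrable (fun ω => y n ω * y m ω) := by
    intro n m
    rw [show (fun ω => y n ω * y m ω) = _ from funext (expand n m)]
    exact ((int1 n m).add (int2 n m)).add ((int3 n m).add (int4 n m))
  have yy_val : ∀ (n m : ℤ), n ≠ m →
      ∫ ω, y n ω * y m ω = ∑ l, g l ^ 2 * ρ l (n - m) := by
    intro n m hnm
    have I1 : ∫ ω, ∑ k, ∑ l, (g k * g l) * (s k n ω * s l m ω)
        = ∑ l, g l ^ 2 * ρ l (n - m) := by
      rw [integral_finset_sum _ fun k _ =>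
        integrable_finset_sum _ fun l _ => (hss_int k l n m).const_mul _]
      have key : ∀ k : Fin L, ∫ ω, ∑ l, (g k * g l) * (s k n ω * s l m ω)
          = ∑ l, (g k * g l) * (if k = l then ρ l (n - m) else 0) := by
        intro k
        rw [integral_finset_sum _ fun l _ => (hss_int k l n m).const_mul _]
        exact Finset.sum_congr rfl fun l _ => by rw [integral_const_mul, hss]
      simp only [key, mul_ite, mul_zero, Finset.sum_ite_eq, Finset.mem_univ, if_true]
      exact Finset.sum_congr rfl fun l _ => by ring
    have I2 : ∫ ω, ∑ k, ∑ i, (g k * w i) * (s k n ω * v i m ω) = 0 := by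
      rw [integral_finset_sum _ fun k _ =>
        integrable_finset_sum _ fun i _ => (hsv_int k i n m).const_mul _]
      refine Finset.sum_eq_zero fun k _ => ?_
      rw [integral_finset_sum _ fun i _ => (hsv_int k i n m).const_mul _]
      exact Finset.sum_eq_zero fun i _ => by rw [integral_const_mul, hsv, mul_zero]
    have I3 : ∫ ω, ∑ l, ∑ i, (g l * w i) * (s l m ω * v i n ω) = 0 := by
      rw [integral_finset_sum _ fun l _ =>
        integrable_finset_sum _ fun i _ => (hsv_int l i m n).const_mul _]
      refine Finset.sum_eq_zero fun l _ => ?_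
      rw [integral_finset_sum _ fun i _ => (hsv_int l i m n).const_mul _]
      exact Finset.sum_eq_zero fun i _ => by rw [integral_const_mul, hsv, mul_zero]
    have I4 : ∫ ω, ∑ i, ∑ j, (w i * w j) * (v i n ω * v j m ω) = 0 := by
      rw [integral_finset_sum _ fun i _ =>
        integrable_finset_sum _ fun j _ => (hvv_int i j n m).const_mul _]
      refine Finset.sum_eq_zero fun i _ => ?_
      rw [integral_finset_sum _ fun j _ => (hvv_int i j n m).const_mul _]
      refine Finset.sum_eq_zero fun j _ => ?_
      rw [integral_const_mul, hvv]
      simp [hnm]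
    rw [show (fun ω => y n ω * y m ω) = _ from funext (expand n m)]
    rw [integral_add (μ := volume)
        (((int1 n m).add (int2 n m)) : Integrable fun ω =>
          (∑ k, ∑ l, (g k * g l) * (s k n ω * s l m ω))
          + ∑ k, ∑ i, (g k * w i) * (s k n ω * v i m ω))
        (((int3 n m).add (int4 n m)) : Integrable fun ω =>
          (∑ l, ∑ i, (g l * w i) * (s l m ω * v i n ω))
          + ∑ i, ∑ j, (w i * w j) * (v i n ω * v j m ω)),
      integral_add (μ := volume) (int1 n m) (int2 n m),
      integral_add (μ := volume) (int3 n m) (int4 n m),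
      I1, I2, I3, I4]
    ring
  intro n
  constructor
  · have hfe : (fun ω => y n ω * e n ω)
        = fun ω => ∑ p ∈ Finset.Icc 2 (P + 1), b p * (y n ω * y (n - (p : ℤ)) ω) := by
      funext ω
      rw [he, Finset.mul_sum]
      exact Finset.sum_congr rfl fun p _ => by ring
    rw [hfe, integral_finset_sum (μ := volume) (Finset.Icc 2 (P + 1))
      (f := fun p ω => b p * (y n ω * y (n - (p : ℤ)) ω))
      (fun p _ => (yy_int n (n - (p : ℤ))).const_mul _)]
    have step : ∀ p ∈ Finset.Icc 2 (P + 1),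
        ∫ ω, b p * (y n ω * y (n - (p : ℤ)) ω)
          = b p * ∑ l, g l ^ 2 * ρ l (p : ℤ) := by
      intro p hp
      rw [integral_const_mul]
      have hp2 : 2 ≤ p := (Finset.mem_Icc.mp hp).1
      have hne : n ≠ n - (p : ℤ) := by omega
      rw [yy_val n (n - (p : ℤ)) hne]
      congr 1
      refine Finset.sum_congr rfl fun l _ => ?_
      have hpp : n - (n - (p : ℤ)) = (p : ℤ) := by omega
      rw [hpp]
    rw [Finset.sum_congr rfl step]
    simp only [Finset.mul_sum]
    rw [Finset.sum_comm]
    exact Finset.sum_congr rfl fun l _ =>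
      Finset.sum_congr rfl fun p _ => by ring
  · have hne : n ≠ n - 1 := by omega
    rw [yy_val n (n - 1) hne]
    simp
end

section
/- Let (Ω, μ) be a probability space and S_0, S'_0, …, S_{L−1}, S'_{L−1} : Ω → ℝ be random variables with square-integrable pairwise products satisfying E[S_k S_l] = 0 and E[S_k S'_l] = 0 for k ≠ l, E[S_l S_l] = ρ_l[0] > 0 and E[S_l S'_l] = ρ_l[Δ] for each l. Let g ∈ ℝ^L be nonzero and define X = Σ_l g_l S_l and X' = Σ_l g_l S'_l. Then the normalized autocorrelation of the mixture satisfies E[X X'] / E[X²] ≤ max_{l} ρ_l[Δ]/ρ_l[0]; that is, the normalized autocorrelation of any linear combination of spatially uncorrelated signals is at most the maximum of the individual signals' normalized autocorrelations. -/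
open MeasureTheory Finset


lemma expand_lemma (Ω : Type*) [MeasureSpace Ω]
    {L : ℕ} (S T : Fin L → Ω → ℝ)
    (hint : ∀ k l, Integrable fun ω => S k ω * T l ω)
    (ρ : Fin L → ℝ)
    (huncorr : ∀ k l, k ≠ l → ∫ ω, S k ω * T l ω = 0)
    (hdiag : ∀ l, ∫ ω, S l ω * T l ω = ρ l)
    (g : Fin L → ℝ) :
    (∫ ω, (∑ k, g k * S k ω) * (∑ l, g l * T l ω)) = ∑ l, g l ^ 2 * ρ l := by
  have h1 : ∀ ω, (∑ k, g k * S k ω) * (∑ l, g l * T l ω)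
      = ∑ k, ∑ l, g k * g l * (S k ω * T l ω) := by
    intro ω
    rw [Finset.sum_mul_sum]
    exact Finset.sum_congr rfl fun k _ => Finset.sum_congr rfl fun l _ => by ring
  simp_rw [h1]
  rw [integral_finset_sum _ (fun k _ => integrable_finset_sum _
    (fun l _ => ((hint k l).const_mul _)))]
  have h2 : ∀ k : Fin L, (∫ ω, ∑ l, g k * g l * (S k ω * T l ω)) = g k ^ 2 * ρ k := by
    intro k
    rw [integral_finset_sum _ (fun l _ => ((hint k l).const_mul _))]
    have : ∀ l : Fin L, (∫ ω, g k * g l * (S k ω * T l ω))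
        = g k * g l * ∫ ω, S k ω * T l ω := fun l => integral_const_mul _ _
    simp_rw [this]
    rw [Finset.sum_eq_single k]
    · rw [hdiag]; ring
    · intro l _ hl; rw [huncorr k l (Ne.symm hl)]; ring
    · intro h; exact absurd (Finset.mem_univ k) h
  simp_rw [h2]

/-- Founding principle of the CCA approach to BSS: the normalized autocorrelation of
any linear combination `X = ∑ g_l S_l` of spatially uncorrelated signals is at most
the maximum of the individual signals' normalized autocorrelations `ρ_l[Δ]/ρ_l[0]`. -/
theorem stmt_14 (Ω : Type*) [MeasureSpace Ω] [IsProbabilityMeasure (volume : Measure Ω)]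
    (L : ℕ) (hL : 1 ≤ L)
    (S S' : Fin L → Ω → ℝ)
    (hSS_int : ∀ k l, Integrable fun ω => S k ω * S l ω)
    (hSS'_int : ∀ k l, Integrable fun ω => S k ω * S' l ω)
    (ρ0 ρΔ : Fin L → ℝ)
    (huncorr : ∀ k l, k ≠ l → ∫ ω, S k ω * S l ω = 0)
    (huncorr' : ∀ k l, k ≠ l → ∫ ω, S k ω * S' l ω = 0)
    (hvar : ∀ l, ∫ ω, S l ω * S l ω = ρ0 l)
    (hvar_pos : ∀ l, 0 < ρ0 l)
    (hlag : ∀ l, ∫ ω, S l ω * S' l ω = ρΔ l)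
    (g : Fin L → ℝ) (hg : g ≠ 0)
    (X X' : Ω → ℝ)
    (hX : ∀ ω, X ω = ∑ l, g l * S l ω)
    (hX' : ∀ ω, X' ω = ∑ l, g l * S' l ω) :
    (∫ ω, X ω * X' ω) / (∫ ω, (X ω) ^ 2) ≤
      Finset.univ.sup' ⟨(⟨0, hL⟩ : Fin L), Finset.mem_univ _⟩
        (fun l => ρΔ l / ρ0 l) := by
  set M := Finset.univ.sup' ⟨(⟨0, hL⟩ : Fin L), Finset.mem_univ _⟩
      (fun l => ρΔ l / ρ0 l) with hM
  have hnum : (∫ ω, X ω * X' ω) = ∑ l, g l ^ 2 * ρΔ l := by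
    simp_rw [hX, hX']
    exact expand_lemma Ω S S' hSS'_int ρΔ huncorr' hlag g
  have hden : (∫ ω, (X ω) ^ 2) = ∑ l, g l ^ 2 * ρ0 l := by
    have h := expand_lemma Ω S S hSS_int ρ0 huncorr hvar g
    calc (∫ ω, (X ω) ^ 2) = ∫ ω, (∑ k, g k * S k ω) * (∑ l, g l * S l ω) := by
          simp_rw [hX, pow_two]
      _ = _ := h
  have hden_pos : 0 < ∑ l, g l ^ 2 * ρ0 l := by
    obtain ⟨l, hl⟩ : ∃ l, g l ≠ 0 := by
      by_contra h
      push_neg at h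
      exact hg (funext h)
    apply Finset.sum_pos' (fun i _ => mul_nonneg (sq_nonneg _) (hvar_pos i).le)
    exact ⟨l, Finset.mem_univ l, mul_pos (by positivity) (hvar_pos l)⟩
  rw [hnum, hden, div_le_iff₀ hden_pos]
  rw [Finset.mul_sum]
  apply Finset.sum_le_sum
  intro l _
  have hMl : ρΔ l / ρ0 l ≤ M := Finset.le_sup' (fun l => ρΔ l / ρ0 l) (Finset.mem_univ l)
  have : ρΔ l ≤ M * ρ0 l := (div_le_iff₀ (hvar_pos l)).mp hMl |>.trans_eq (by ring)
  calc g l ^ 2 * ρΔ l ≤ g l ^ 2 * (M * ρ0 l) :=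
        mul_le_mul_of_nonneg_left this (sq_nonneg _)
    _ = M * (g l ^ 2 * ρ0 l) := by ring
end
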